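/- With the reflection ũ = u − (2 v_n n, 0)^T, one has A_n(u)^-_Θ (ũ − u)·ψ = −(2λ_m²/(θ² + λ_m²)) v_n (χ + λ_m φ_n) for all ψ = (φ, χ); in particular A_n(u)^-_Θ (ũ − u) = 0 if and only if v_n = 0. -/

import Mathlib

open Matrix

set_option maxHeartbeats 1600000 in
/-- With the reflection `ũ = u − (2 vₙ n, 0)`:
`Aₙ(u)⁻_Θ (ũ − u)·ψ = −(2λm²/(θ² + λm²)) vₙ (χ + λm φₙ)` for all `ψ = (φ, χ)`;
in particular `Aₙ(u)⁻_Θ (ũ − u) = 0 ↔ vₙ = 0`. -/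
theorem stmt_14 (ρ θ : ℝ) (hρ : 0 < ρ) (hθ : 0 < θ)
    (n : Fin 2 → ℝ) (hn : n 0 ^ 2 + n 1 ^ 2 = 1)
    (v : Fin 2 → ℝ) (p : ℝ) (vn : ℝ) (hvn : vn = v 0 * n 0 + v 1 * n 1)
    (Th A : Matrix (Fin 3) (Fin 3) ℝ)
    (hTh : Th = Matrix.diagonal ![1, 1, θ])
    (hA : A = !![ρ * vn, 0, n 0; 0, ρ * vn, n 1; n 0, n 1, 0])
    (R : Matrix (Fin 3) (Fin 3) ℝ) (dv : Fin 3 → ℝ)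
    (hR : R * Rᵀ = 1)
    (hdec : Th * A * Th = R * Matrix.diagonal dv * Rᵀ)
    (Mneg : Matrix (Fin 3) (Fin 3) ℝ)
    (hMneg : Mneg = Th⁻¹ * (R * Matrix.diagonal (fun i => min (dv i) 0) * Rᵀ) * Th⁻¹)
    (lm : ℝ) (hlm : lm = (ρ * vn - Real.sqrt (4 * θ ^ 2 + ρ ^ 2 * vn ^ 2)) / 2) :
    (∀ (φ : Fin 2 → ℝ) (χ : ℝ),
      (Mneg *ᵥ ![-(2 * vn * n 0), -(2 * vn * n 1), 0]) ⬝ᵥ ![φ 0, φ 1, χ] =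
        -(2 * lm ^ 2 / (θ ^ 2 + lm ^ 2)) * vn * (χ + lm * (φ 0 * n 0 + φ 1 * n 1))) ∧
    (Mneg *ᵥ ![-(2 * vn * n 0), -(2 * vn * n 1), 0] = 0 ↔ vn = 0) := by
  have hθ' : θ ≠ 0 := ne_of_gt hθ
  have hs0 : (0:ℝ) ≤ 4 * θ ^ 2 + ρ ^ 2 * vn ^ 2 := by positivity
  have hs2 : Real.sqrt (4 * θ ^ 2 + ρ ^ 2 * vn ^ 2) ^ 2 = 4 * θ ^ 2 + ρ ^ 2 * vn ^ 2 :=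
    Real.sq_sqrt hs0
  have hsnn : (0:ℝ) ≤ Real.sqrt (4 * θ ^ 2 + ρ ^ 2 * vn ^ 2) := Real.sqrt_nonneg _
  have hsgt1 : ρ * vn < Real.sqrt (4 * θ ^ 2 + ρ ^ 2 * vn ^ 2) := by
    nlinarith [hs2, hsnn, hθ, sq_nonneg (Real.sqrt (4 * θ ^ 2 + ρ ^ 2 * vn ^ 2) - ρ * vn)]
  have hsgt2 : -(ρ * vn) < Real.sqrt (4 * θ ^ 2 + ρ ^ 2 * vn ^ 2) := by
    nlinarith [hs2, hsnn, hθ, sq_nonneg (Real.sqrt (4 * θ ^ 2 + ρ ^ 2 * vn ^ 2) + ρ * vn)]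
  set lp : ℝ := (ρ * vn + Real.sqrt (4 * θ ^ 2 + ρ ^ 2 * vn ^ 2)) / 2 with hlpdef
  have hsum : lm + lp = ρ * vn := by rw [hlm, hlpdef]; ring
  have hprod : lm * lp = -θ ^ 2 := by
    rw [hlm, hlpdef]; linear_combination (-(1:ℝ)/4) * hs2
  have hlm_neg : lm < 0 := by rw [hlm]; linarith
  have hlp_pos : 0 < lp := by rw [hlpdef]; linarith
  have hlm0 : lm ≠ 0 := ne_of_lt hlm_neg
  have hlp0 : lp ≠ 0 := ne_of_gt hlp_pos
  have h1 : lm - lp ≠ 0 := by nlinarith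
  have h2 : lm - ρ * vn ≠ 0 := by nlinarith [sq_nonneg θ]
  have h3 : lp - ρ * vn ≠ 0 := by nlinarith [sq_nonneg θ]
  have h2' : ρ * vn - lm ≠ 0 := fun h => h2 (by linarith)
  have h3' : ρ * vn - lp ≠ 0 := fun h => h3 (by linarith)
  clear_value lp
  have hθ2 : θ ^ 2 = -(lm * lp) := by linarith
  have hne : -(lm * lp) + lm ^ 2 ≠ 0 := by
    intro h
    exact mul_ne_zero hlm0 h1 (by linear_combination h)
  have hR' : Rᵀ * R = 1 := mul_eq_one_comm.mp hR
  set Sm : Matrix (Fin 3) (Fin 3) ℝ :=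
    !![ρ*vn, 0, θ*n 0; 0, ρ*vn, θ*n 1; θ*n 0, θ*n 1, 0] with hSmdef
  clear_value Sm
  have hS : Sm = R * Matrix.diagonal dv * Rᵀ := by
    rw [← hdec, hTh, hA, hSmdef]
    ext i j
    fin_cases i <;> fin_cases j <;>
      simp [Matrix.mul_apply, Fin.sum_univ_three, Matrix.diagonal] <;> ring
  have hroots : ∀ i, (dv i - ρ*vn) * ((dv i)^2 - ρ*vn*(dv i) - θ^2) = 0 := by
    intro i
    have hSR : Sm * R = R * Matrix.diagonal dv := by
      rw [hS, Matrix.mul_assoc (R * Matrix.diagonal dv) Rᵀ R, hR', Matrix.mul_one]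
    have hcol : ∀ j : Fin 3, ∑ k, Sm j k * R k i = R j i * dv i := by
      intro j
      have h := congrFun (congrFun hSR j) i
      simp only [Matrix.mul_diagonal] at h
      simpa [Matrix.mul_apply] using h
    have e0 := hcol 0
    have e1 := hcol 1
    have e2 := hcol 2
    simp [hSmdef, Fin.sum_univ_three] at e0 e1 e2
    have hx1 : R 0 i ^ 2 + R 1 i ^ 2 + R 2 i ^ 2 = 1 := by
      have h := congrFun (congrFun hR' i) i
      simpa [Matrix.mul_apply, Fin.sum_univ_three, Matrix.one_apply, sq] using h
    set d := dv i
    set x0 := R 0 i; set x1 := R 1 i; set x2 := R 2 i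
    have hP2 : (d^2 - ρ*vn*d - θ^2) * x2 = 0 := by
      linear_combination (ρ*vn - d)*e2 - θ*n 0*e0 - θ*n 1*e1 + θ^2*x2*hn
    have g0 : (d - ρ*vn) * (d^2 - ρ*vn*d - θ^2) * x0 = 0 := by
      linear_combination θ*n 0*hP2 - (d^2 - ρ*vn*d - θ^2)*e0
    have g1 : (d - ρ*vn) * (d^2 - ρ*vn*d - θ^2) * x1 = 0 := by
      linear_combination θ*n 1*hP2 - (d^2 - ρ*vn*d - θ^2)*e1
    have g2 : (d - ρ*vn) * (d^2 - ρ*vn*d - θ^2) * x2 = 0 := by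
      linear_combination (d - ρ*vn)*hP2
    linear_combination x0*g0 + x1*g1 + x2*g2 - (d - ρ*vn) * (d^2 - ρ*vn*d - θ^2)*hx1
  set α : ℝ := lm / ((lm - lp)*(lm - ρ*vn)) with hαdef
  set β : ℝ := min (ρ*vn) 0 / ((ρ*vn - lm)*(ρ*vn - lp)) with hβdef
  clear_value α β
  have hmin : ∀ i, min (dv i) 0
      = α * ((dv i - lp) * (dv i - ρ*vn)) + β * ((dv i - lm) * (dv i - lp)) := by
    intro i
    rcases mul_eq_zero.mp (hroots i) with h | h
    · have hd : dv i = ρ*vn := by linarith [h]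
      rw [hd, hαdef, hβdef, sub_self, mul_zero, mul_zero, zero_add,
        div_mul_cancel₀ _ (mul_ne_zero h2' h3')]
    · have hll : (dv i - lm) * (dv i - lp) = 0 := by
        linear_combination h - (dv i)*hsum + hprod
      rcases mul_eq_zero.mp hll with h' | h'
      · have hd : dv i = lm := by linarith
        rw [hd, hαdef, hβdef, min_eq_left hlm_neg.le, sub_self, zero_mul, mul_zero, add_zero,
          div_mul_cancel₀ _ (mul_ne_zero h1 h2)]
      · have hd : dv i = lp := by linarith
        rw [hd, min_eq_right hlp_pos.le]
        ring
  have hNid : R * Matrix.diagonal (fun i => min (dv i) 0) * Rᵀ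
      = α • ((Sm - lp • 1) * (Sm - (ρ*vn) • 1)) + β • ((Sm - lm • 1) * (Sm - lp • 1)) := by
    have hone : ∀ c : ℝ, c • (1 : Matrix (Fin 3) (Fin 3) ℝ) = Matrix.diagonal (fun _ => c) := by
      intro c
      ext i j
      rcases eq_or_ne i j with h | h <;>
        simp [h, Matrix.one_apply, Matrix.diagonal_apply_ne, Matrix.diagonal_apply_eq]
    have h1' : ∀ c : ℝ, Sm - c • 1 = R * Matrix.diagonal (fun i => dv i - c) * Rᵀ := by
      intro c
      calc Sm - c • 1 = R * Matrix.diagonal dv * Rᵀ - c • (R * Rᵀ) := by rw [hS, hR]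
      _ = R * Matrix.diagonal dv * Rᵀ - R * (c • (1:Matrix (Fin 3) (Fin 3) ℝ)) * Rᵀ := by
          rw [Matrix.mul_smul, Matrix.mul_one, Matrix.smul_mul]
      _ = R * (Matrix.diagonal dv - c • 1) * Rᵀ := by rw [Matrix.mul_sub, Matrix.sub_mul]
      _ = R * Matrix.diagonal (fun i => dv i - c) * Rᵀ := by
          rw [hone c, Matrix.diagonal_sub]
    have key : ∀ f g : Fin 3 → ℝ, (R * Matrix.diagonal f * Rᵀ) * (R * Matrix.diagonal g * Rᵀ)
        = R * Matrix.diagonal (fun i => f i * g i) * Rᵀ := by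
      intro f g
      simp only [Matrix.mul_assoc]
      rw [← Matrix.mul_assoc Rᵀ R, hR', Matrix.one_mul,
        ← Matrix.mul_assoc (Matrix.diagonal f) (Matrix.diagonal g), Matrix.diagonal_mul_diagonal]
    have hfac : ∀ a b : ℝ, (Sm - a • 1) * (Sm - b • 1)
        = R * Matrix.diagonal (fun i => (dv i - a) * (dv i - b)) * Rᵀ := by
      intro a b
      rw [h1' a, h1' b, key]
    rw [hfac, hfac]
    have hd : Matrix.diagonal (fun i => min (dv i) 0)
        = α • Matrix.diagonal (fun i => (dv i - lp) * (dv i - ρ*vn))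
          + β • Matrix.diagonal (fun i => (dv i - lm) * (dv i - lp)) := by
      ext i j
      rcases eq_or_ne i j with h | h
      · subst h
        simp only [Matrix.diagonal_apply_eq, Matrix.add_apply, Matrix.smul_apply, smul_eq_mul]
        exact hmin i
      · simp [Matrix.diagonal_apply_ne _ h]
    rw [hd, Matrix.mul_add, Matrix.add_mul, Matrix.mul_smul, Matrix.smul_mul,
      Matrix.mul_smul, Matrix.smul_mul]
  have hThinv : Th⁻¹ = Matrix.diagonal ![1,1,θ⁻¹] := by
    rw [hTh]
    apply Matrix.inv_eq_right_inv
    rw [Matrix.diagonal_mul_diagonal]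
    ext i j
    fin_cases i <;> fin_cases j <;> simp [Matrix.diagonal, Matrix.one_apply, hθ']
  have hw1 : ((Sm - lp • 1) * (Sm - (ρ*vn) • 1)) *ᵥ ![-(2 * vn * n 0), -(2 * vn * n 1), 0]
      = ![-2*vn*θ^2*n 0, -2*vn*θ^2*n 1, 2*vn*lp*θ] := by
    funext j
    fin_cases j
    · simp [hSmdef, Matrix.mulVec, dotProduct, Matrix.mul_apply, Fin.sum_univ_three,
        Matrix.one_apply, Matrix.smul_apply]
      linear_combination (-2*θ^2*vn*n 0) * hn
    · simp [hSmdef, Matrix.mulVec, dotProduct, Matrix.mul_apply, Fin.sum_univ_three,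
        Matrix.one_apply, Matrix.smul_apply]
      linear_combination (-2*θ^2*vn*n 1) * hn
    · simp [hSmdef, Matrix.mulVec, dotProduct, Matrix.mul_apply, Fin.sum_univ_three,
        Matrix.one_apply, Matrix.smul_apply]
      linear_combination (2*lp*θ*vn) * hn
  have hw2 : ((Sm - lm • 1) * (Sm - lp • 1)) *ᵥ ![-(2 * vn * n 0), -(2 * vn * n 1), 0] = 0 := by
    funext j
    fin_cases j
    · simp [hSmdef, Matrix.mulVec, dotProduct, Matrix.mul_apply, Fin.sum_univ_three,
        Matrix.one_apply, Matrix.smul_apply]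
      linear_combination (2*ρ*vn^2*n 0)*hsum - 2*vn*n 0*hprod - 2*vn*θ^2*n 0*hn
    · simp [hSmdef, Matrix.mulVec, dotProduct, Matrix.mul_apply, Fin.sum_univ_three,
        Matrix.one_apply, Matrix.smul_apply]
      linear_combination (2*ρ*vn^2*n 1)*hsum - 2*vn*n 1*hprod - 2*vn*θ^2*n 1*hn
    · simp [hSmdef, Matrix.mulVec, dotProduct, Matrix.mul_apply, Fin.sum_univ_three,
        Matrix.one_apply, Matrix.smul_apply]
      linear_combination (2*vn*θ*(n 0^2+n 1^2))*hsum
  have hkey : Mneg *ᵥ ![-(2 * vn * n 0), -(2 * vn * n 1), 0]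
      = ![-(2 * lm ^ 2 / (θ ^ 2 + lm ^ 2)) * vn * (lm * n 0),
          -(2 * lm ^ 2 / (θ ^ 2 + lm ^ 2)) * vn * (lm * n 1),
          -(2 * lm ^ 2 / (θ ^ 2 + lm ^ 2)) * vn] := by
    rw [hMneg, hNid, hThinv, ← Matrix.mulVec_mulVec, ← Matrix.mulVec_mulVec]
    have hTw : Matrix.diagonal ![1,1,θ⁻¹] *ᵥ ![-(2 * vn * n 0), -(2 * vn * n 1), 0]
        = ![-(2 * vn * n 0), -(2 * vn * n 1), 0] := by
      funext j
      fin_cases j <;> simp [Matrix.mulVec, dotProduct, Fin.sum_univ_three, Matrix.diagonal]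
    rw [hTw, Matrix.add_mulVec, Matrix.smul_mulVec, Matrix.smul_mulVec,
      hw1, hw2, smul_zero, add_zero]
    funext j
    fin_cases j
    · simp [Matrix.mulVec, dotProduct, Fin.sum_univ_three, Matrix.diagonal]
      rw [hαdef, ← hsum, hθ2]
      field_simp [hne, hlp0, h1]
      ring_nf
      field_simp [show -lp + lm ≠ 0 from fun h => h1 (by linarith)]
      ring
    · simp [Matrix.mulVec, dotProduct, Fin.sum_univ_three, Matrix.diagonal]
      rw [hαdef, ← hsum, hθ2]
      field_simp [hne, hlp0, h1]
      ring_nf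
      field_simp [show -lp + lm ≠ 0 from fun h => h1 (by linarith)]
      ring
    · simp [Matrix.mulVec, dotProduct, Fin.sum_univ_three, Matrix.diagonal]
      rw [hαdef, ← hsum, hθ2]
      field_simp [hne, hlp0, h1]
      ring_nf
      field_simp [show -lp + lm ≠ 0 from fun h => h1 (by linarith)]
      ring
  constructor
  · intro φ χ
    rw [hkey]
    simp [dotProduct, Fin.sum_univ_three]
    ring
  · rw [hkey]
    constructor
    · intro h
      have hc : 2 * lm ^ 2 / (θ ^ 2 + lm ^ 2) ≠ 0 := by
        apply div_ne_zero
        · exact mul_ne_zero two_ne_zero (pow_ne_zero 2 hlm0)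
        · positivity
      have h2c' : -(2 * lm ^ 2 / (θ ^ 2 + lm ^ 2)) * vn = 0 := by
        have h2c := congrFun h 2
        simp only [Matrix.cons_val_two, Matrix.tail_cons, Matrix.head_cons,
          Pi.zero_apply] at h2c
        exact h2c
      rcases mul_eq_zero.mp h2c' with hcase | hcase
      · exact absurd (neg_eq_zero.mp hcase) hc
      · exact hcase
    · intro h
      funext j
      fin_cases j <;> simp [h]
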